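/- Let c₁, …, c_N ∈ ℂ be pairwise distinct and let R be a polynomial. Define V(z) = Σ_{k=1}^N 1/(z − c_k) + R(z). Then the function r(z) = V(z)² + V'(z) extends to a polynomial (has no poles) if and only if for every k, R(c_k) + Σ_{l ≠ k} 1/(c_k − c_l) = 0. -/

import Mathlib

open Finset

open Polynomial in
lemma riccati_key_alg (N : ℕ) (c : Fin N → ℂ) (hc : Function.Injective c)
    (R : Polynomial ℂ) (q : Fin N → Polynomial ℂ)
    (hq : ∀ k, (X - C (c k)) * q k = R - C (R.eval (c k)))
    (z : ℂ) (hz : ∀ k, z ≠ c k) :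
    ((∑ k, 1 / (z - c k)) + R.eval z) ^ 2
        + (-(∑ k, 1 / (z - c k) ^ 2) + R.derivative.eval z)
      = (R ^ 2 + R.derivative + C 2 * ∑ k, q k).eval z
        + 2 * ∑ k, (R.eval (c k) + ∑ l ∈ univ.filter (fun l => l ≠ k), 1 / (c k - c l))
            / (z - c k) := by
  have hzc : ∀ k, z - c k ≠ 0 := fun k => sub_ne_zero.mpr (hz k)
  -- square expansion
  have h1 : (∑ k, (z - c k)⁻¹) ^ 2
      = ∑ k, ((z - c k)⁻¹) ^ 2 + ∑ k, ∑ l ∈ univ.erase k, (z - c k)⁻¹ * (z - c l)⁻¹ := by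
    rw [sq, Finset.sum_mul_sum, ← Finset.sum_add_distrib]
    refine Finset.sum_congr rfl fun k _ => ?_
    rw [← Finset.add_sum_erase univ (fun l => (z - c k)⁻¹ * (z - c l)⁻¹) (mem_univ k), sq]
  -- symmetrization of the off-diagonal double sum
  have hswap : ∑ k, ∑ l ∈ univ.erase k, (z - c l)⁻¹ * (c k - c l)⁻¹
      = ∑ l, ∑ k ∈ univ.erase l, (z - c l)⁻¹ * (c k - c l)⁻¹ := by
    refine Finset.sum_comm' ?_
    intro x y
    simp [mem_erase, ne_comm]
  have hdouble : ∑ k, ∑ l ∈ univ.erase k, (z - c k)⁻¹ * (z - c l)⁻¹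
      = 2 * ∑ k, (z - c k)⁻¹ * ∑ l ∈ univ.erase k, (c k - c l)⁻¹ := by
    have hterm : ∀ k, ∀ l ∈ univ.erase k,
        (z - c k)⁻¹ * (z - c l)⁻¹
          = (z - c k)⁻¹ * (c k - c l)⁻¹ - (z - c l)⁻¹ * (c k - c l)⁻¹ := by
      intro k l hl
      have hkl : c k - c l ≠ 0 := sub_ne_zero.mpr fun h => (mem_erase.mp hl).1 (hc h.symm)
      have ha := hzc k
      have hb := hzc l
      field_simp
      ring
    calc ∑ k, ∑ l ∈ univ.erase k, (z - c k)⁻¹ * (z - c l)⁻¹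
        = ∑ k, ∑ l ∈ univ.erase k,
            ((z - c k)⁻¹ * (c k - c l)⁻¹ - (z - c l)⁻¹ * (c k - c l)⁻¹) :=
          Finset.sum_congr rfl fun k _ => Finset.sum_congr rfl (hterm k)
      _ = ∑ k, ∑ l ∈ univ.erase k, (z - c k)⁻¹ * (c k - c l)⁻¹
            - ∑ k, ∑ l ∈ univ.erase k, (z - c l)⁻¹ * (c k - c l)⁻¹ := by
          rw [← Finset.sum_sub_distrib]
          exact Finset.sum_congr rfl fun k _ => Finset.sum_sub_distrib _ _
      _ = ∑ k, ∑ l ∈ univ.erase k, (z - c k)⁻¹ * (c k - c l)⁻¹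
            + ∑ k, ∑ l ∈ univ.erase k, (z - c k)⁻¹ * (c k - c l)⁻¹ := by
          rw [hswap, sub_eq_add_neg, ← Finset.sum_neg_distrib]
          congr 1
          refine Finset.sum_congr rfl fun l _ => ?_
          rw [← Finset.sum_neg_distrib]
          refine Finset.sum_congr rfl fun k _ => ?_
          rw [show c k - c l = -(c l - c k) by ring, inv_neg]
          ring
      _ = 2 * ∑ k, (z - c k)⁻¹ * ∑ l ∈ univ.erase k, (c k - c l)⁻¹ := by
          rw [← two_mul]
          congr 1
          exact Finset.sum_congr rfl fun k _ => (Finset.mul_sum _ _ _).symm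
  -- the polynomial-part split of R(z)/(z-c k)
  have h3 : R.eval z * ∑ k, (z - c k)⁻¹
      = (∑ k, (q k).eval z) + ∑ k, R.eval (c k) * (z - c k)⁻¹ := by
    rw [Finset.mul_sum, ← Finset.sum_add_distrib]
    refine Finset.sum_congr rfl fun k _ => ?_
    have e1 : (z - c k) * (q k).eval z = R.eval z - R.eval (c k) := by
      have := congrArg (eval z) (hq k)
      simpa using this
    have e2 : (z - c k) * (z - c k)⁻¹ = 1 := mul_inv_cancel₀ (hzc k)
    linear_combination (-(z - c k)⁻¹) * e1 + (q k).eval z * e2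
  -- assemble
  simp only [one_div, Finset.filter_ne', div_eq_mul_inv, one_mul, ← inv_pow]
  simp only [eval_add, eval_mul, eval_pow, eval_C, eval_finset_sum]
  have hrhs : ∀ k, (R.eval (c k) + ∑ l ∈ univ.erase k, (c k - c l)⁻¹) * (z - c k)⁻¹
      = R.eval (c k) * (z - c k)⁻¹ + (z - c k)⁻¹ * ∑ l ∈ univ.erase k, (c k - c l)⁻¹ :=
    fun k => by ring
  rw [Finset.sum_congr rfl fun k _ => hrhs k, Finset.sum_add_distrib]
  linear_combination h1 + hdouble + 2 * h3

open Polynomial in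
theorem riccati_aux (N : ℕ) (c : Fin N → ℂ)
    (hc : Function.Injective c) (R : Polynomial ℂ) (V : ℂ → ℂ)
    (hV : ∀ z : ℂ, (∀ k, z ≠ c k) → V z = (∑ k, 1 / (z - c k)) + R.eval z) :
    (∃ Q : Polynomial ℂ, ∀ z : ℂ, (∀ k, z ≠ c k) →
        V z ^ 2 + deriv V z = Q.eval z) ↔
      ∀ k : Fin N,
        R.eval (c k) + ∑ l ∈ univ.filter (fun l => l ≠ k), 1 / (c k - c l) = 0 := by
  -- quotient polynomials
  set q : Fin N → Polynomial ℂ := fun k => (R - C (R.eval (c k))) / (X - C (c k)) with hqdef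
  have hq : ∀ k, (X - C (c k)) * q k = R - C (R.eval (c k)) := fun k =>
    EuclideanDomain.mul_div_cancel' (Polynomial.X_sub_C_ne_zero (c k))
      (Polynomial.X_sub_C_dvd_sub_C_eval)
  set A : Fin N → ℂ :=
    fun k => R.eval (c k) + ∑ l ∈ univ.filter (fun l => l ≠ k), 1 / (c k - c l) with hAdef
  set B : Polynomial ℂ := R ^ 2 + R.derivative + C 2 * ∑ k, q k with hBdef
  -- openness of the good set
  have hopen : IsOpen {z : ℂ | ∀ k, z ≠ c k} := by
    have : {z : ℂ | ∀ k, z ≠ c k} = (Set.range c)ᶜ := by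
      ext z; simp [eq_comm]
    rw [this]
    exact (Set.finite_range c).isClosed.isOpen_compl
  -- derivative computation
  have hderiv : ∀ z : ℂ, (∀ k, z ≠ c k) →
      deriv V z = -(∑ k, 1 / (z - c k) ^ 2) + R.derivative.eval z := by
    intro z hz
    have hmem : {z : ℂ | ∀ k, z ≠ c k} ∈ nhds z := hopen.mem_nhds hz
    have hEq : V =ᶠ[nhds z] fun w => (∑ k, 1 / (w - c k)) + R.eval w :=
      Filter.eventuallyEq_of_mem hmem fun w hw => hV w hw
    rw [hEq.deriv_eq]
    have hF : HasDerivAt (fun w => (∑ k, 1 / (w - c k)) + R.eval w)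
        ((∑ k, -(1 / (z - c k) ^ 2)) + R.derivative.eval z) z := by
      refine HasDerivAt.add ?_ (R.hasDerivAt z)
      refine HasDerivAt.fun_sum fun k _ => ?_
      have h1 : HasDerivAt (fun w : ℂ => w - c k) 1 z := (hasDerivAt_id z).sub_const _
      have h2 := h1.fun_inv (sub_ne_zero.mpr (hz k))
      simpa [one_div, neg_div] using h2
    rw [hF.deriv, Finset.sum_neg_distrib]
  -- the master pointwise identity
  have hId : ∀ z : ℂ, (∀ k, z ≠ c k) →
      V z ^ 2 + deriv V z = B.eval z + 2 * ∑ k, A k / (z - c k) := by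
    intro z hz
    rw [hV z hz, hderiv z hz]
    exact riccati_key_alg N c hc R q hq z hz
  constructor
  · rintro ⟨Q, hQ⟩ k
    have hprodne : ∏ j ∈ univ.erase k, (c k - c j) ≠ 0 := by
      rw [Finset.prod_ne_zero_iff]
      intro j hj
      exact sub_ne_zero.mpr fun h => (mem_erase.mp hj).1 (hc h).symm
    have hpoly : (Q - B) * ∏ j, (X - C (c j))
        = C 2 * ∑ l, C (A l) * ∏ j ∈ univ.erase l, (X - C (c j)) := by
      apply Polynomial.eq_of_infinite_eval_eq
      apply Set.Infinite.mono (s := (Set.range c)ᶜ)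
      · intro z hz
        have hz' : ∀ j, z ≠ c j := by
          intro j h
          exact hz ⟨j, h.symm⟩
        have hzc : ∀ j, z - c j ≠ 0 := fun j => sub_ne_zero.mpr (hz' j)
        have hQz : Q.eval z = B.eval z + 2 * ∑ l, A l / (z - c l) := by
          rw [← hQ z hz', hId z hz']
        show eval z ((Q - B) * ∏ j, (X - C (c j)))
            = eval z (C 2 * ∑ l, C (A l) * ∏ j ∈ univ.erase l, (X - C (c j)))
        rw [eval_mul, eval_sub, eval_prod, eval_mul, eval_C, eval_finset_sum, hQz]
        simp only [eval_mul, eval_C, eval_prod, eval_sub, eval_X]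
        rw [add_sub_cancel_left, Finset.mul_sum, Finset.mul_sum, Finset.sum_mul]
        refine Finset.sum_congr rfl fun l _ => ?_
        rw [← Finset.mul_prod_erase univ _ (mem_univ l)]
        field_simp [hzc l]
      · exact (Set.finite_range c).infinite_compl
    have := congrArg (eval (c k)) hpoly
    simp only [eval_mul, eval_sub, eval_prod, eval_C, eval_finset_sum, eval_X] at this
    rw [Finset.prod_eq_zero (mem_univ k) (by simp), mul_zero] at this
    rw [Finset.sum_eq_single_of_mem k (mem_univ k) ?side] at this
    · have h2 : (2 : ℂ) * (A k * ∏ j ∈ univ.erase k, (c k - c j)) = 0 := this.symm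
      rcases mul_eq_zero.mp h2 with h | h
      · norm_num at h
      rcases mul_eq_zero.mp h with h | h
      · exact h
      · exact absurd h hprodne
    case side =>
      intro l _ hlk
      rw [Finset.prod_eq_zero (i := k) (mem_erase.mpr ⟨hlk.symm, mem_univ k⟩) (by simp),
        mul_zero]
  · intro hA
    refine ⟨B, fun z hz => ?_⟩
    rw [hId z hz]
    have : ∀ k : Fin N, A k = 0 := hA
    simp [this]

/-- For V(z) = Σₖ 1/(z−cₖ) + R(z) with the cₖ pairwise distinct, V² + V' extends to a
polynomial iff R(cₖ) + Σ_{l≠k} 1/(cₖ−c_l) = 0 for every k. -/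
theorem riccati_pole_cancellation_iff (N : ℕ) (c : Fin N → ℂ)
    (hc : Function.Injective c) (R : Polynomial ℂ) (V : ℂ → ℂ)
    (hV : ∀ z : ℂ, (∀ k, z ≠ c k) → V z = (∑ k, 1 / (z - c k)) + R.eval z) :
    (∃ Q : Polynomial ℂ, ∀ z : ℂ, (∀ k, z ≠ c k) →
        V z ^ 2 + deriv V z = Q.eval z) ↔
      ∀ k : Fin N,
        R.eval (c k) + ∑ l ∈ univ.filter (fun l => l ≠ k), 1 / (c k - c l) = 0 := by
  exact riccati_aux N c hc R V hV
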